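/- Suppose each F_i : R^n → R is convex and differentiable with ‖∇F_i(w)‖_2 ≤ L for all w, and F(w) = (1/m) Σ_i F_i(w). If w̄^(k+1) = w̄^(k) - (α^(k)/m) Σ_j ∇F_j(w_j^(k)), then for every y ∈ R^n: ‖w̄^(k+1) - y‖² ≤ ‖w̄^(k) - y‖² - (2α^(k)/m) Σ_j (F_j(w_j^(k)) + ∇F_j(w_j^(k))·(w̄^(k) - w_j^(k)) - F_j(y)) + (α^(k))² L². -/

import Mathlib

open RealInnerProductSpace

lemma grad_ineq {E : Type*} [NormedAddCommGroup E] [InnerProductSpace ℝ E] [CompleteSpace E]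
    {f : E → ℝ} {g x y : E} (hconv : ConvexOn ℝ Set.univ f)
    (hg : HasGradientAt f g x) :
    f x + ⟪g, y - x⟫ ≤ f y := by
  have hc : ∀ t : ℝ, HasDerivAt (fun t : ℝ => x + t • (y - x)) (y - x) t := by
    intro t
    simpa using ((hasDerivAt_id t).smul_const (y - x)).const_add x
  have hψ : HasDerivAt (fun t : ℝ => f (x + t • (y - x))) ⟪g, y - x⟫ 0 := by
    have := HasFDerivAt.comp_hasDerivAt (x := (0:ℝ)) (by simpa using hg.hasFDerivAt) (hc 0)
    exact this
  have hslope : ∀ t : ℝ, 0 < t → t ≤ 1 →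
      (f (x + t • (y - x)) - f x) / t ≤ f y - f x := by
    intro t ht ht1
    have h := hconv.2 (Set.mem_univ x) (Set.mem_univ y)
      (by linarith : (0:ℝ) ≤ 1 - t) ht.le (by ring)
    rw [smul_eq_mul, smul_eq_mul] at h
    have heq : x + t • (y - x) = (1 - t) • x + t • y := by
      simp [smul_sub, sub_smul]; abel
    rw [heq]
    rw [div_le_iff₀ ht]
    calc f ((1-t) • x + t • y) - f x ≤ (1-t) * f x + t * f y - f x := by linarith
      _ = (f y - f x) * t := by ring
  have htend : Filter.Tendsto (fun t : ℝ => (f (x + t • (y - x)) - f x) / t)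
      (nhdsWithin 0 (Set.Ioi 0)) (nhds ⟪g, y - x⟫) := by
    have := hψ.tendsto_slope_zero_right
    simpa [slope_def_field, div_eq_inv_mul] using this
  have hle : ⟪g, y - x⟫ ≤ f y - f x := by
    refine le_of_tendsto htend ?_
    filter_upwards [Ioo_mem_nhdsGT_of_mem (Set.left_mem_Ico.2 one_pos)] with t ht
    exact hslope t ht.1 ht.2.le
  linarith

open RealInnerProductSpace in
/-- Key descent inequality: for convex differentiable `F_j` with gradients bounded
by `L`, and `w̄' = w̄ - (α/m) ∑ⱼ ∇F_j(w_j)`, for every `y`: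
`‖w̄' - y‖² ≤ ‖w̄ - y‖² - (2α/m) ∑ⱼ (F_j(w_j) + ⟪∇F_j(w_j), w̄ - w_j⟫ - F_j(y)) + α²L²`. -/
theorem stmt8 (n m : ℕ) (F : Fin m → EuclideanSpace ℝ (Fin n) → ℝ)
    (gF : Fin m → EuclideanSpace ℝ (Fin n) → EuclideanSpace ℝ (Fin n))
    (L : ℝ) (hL : 0 < L)
    (hconv : ∀ j, ConvexOn ℝ Set.univ (F j))
    (hgrad : ∀ j w, HasGradientAt (F j) (gF j w) w)
    (hbound : ∀ j w, ‖gF j w‖ ≤ L)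
    (α : ℝ) (hα : 0 < α) (hm : 0 < m)
    (w : Fin m → EuclideanSpace ℝ (Fin n))
    (wbar wbar' : EuclideanSpace ℝ (Fin n))
    (hupd : wbar' = wbar - (α / m) • ∑ j, gF j (w j)) :
    ∀ y : EuclideanSpace ℝ (Fin n),
      ‖wbar' - y‖ ^ 2 ≤ ‖wbar - y‖ ^ 2
        - (2 * α / m) * ∑ j, (F j (w j) + ⟪gF j (w j), wbar - w j⟫ - F j y)
        + α ^ 2 * L ^ 2 := by
  intro y
  set S := ∑ j, gF j (w j) with hSdef
  have hmR : (0:ℝ) < m := by exact_mod_cast hm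
  have hS : ‖S‖ ≤ m * L := by
    calc ‖S‖ ≤ ∑ j, ‖gF j (w j)‖ := norm_sum_le _ _
      _ ≤ ∑ _j : Fin m, L := Finset.sum_le_sum (fun j _ => hbound j (w j))
      _ = m * L := by simp [mul_comm]
  have hexp : ‖wbar' - y‖ ^ 2
      = ‖wbar - y‖ ^ 2 - 2 * ((α / m) * ⟪wbar - y, S⟫) + (α / m) ^ 2 * ‖S‖ ^ 2 := by
    rw [hupd]
    have h1 : wbar - (α / m) • S - y = (wbar - y) - (α / m) • S := by abel
    rw [h1, norm_sub_sq_real, real_inner_smul_right, norm_smul]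
    have : ‖α / (m:ℝ)‖ = α / m := by
      rw [Real.norm_eq_abs]; exact abs_of_pos (by positivity)
    rw [this]; ring
  have hquad : (α / m) ^ 2 * ‖S‖ ^ 2 ≤ α ^ 2 * L ^ 2 := by
    have hS0 : (0:ℝ) ≤ ‖S‖ := norm_nonneg _
    have h2 : ‖S‖ ^ 2 ≤ (m * L) ^ 2 := by nlinarith
    calc (α / m) ^ 2 * ‖S‖ ^ 2 ≤ (α / m) ^ 2 * (m * L) ^ 2 := by
          exact mul_le_mul_of_nonneg_left h2 (by positivity)
      _ = α ^ 2 * L ^ 2 := by field_simp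
  have hcross : ∑ j, (F j (w j) + ⟪gF j (w j), wbar - w j⟫ - F j y) ≤ ⟪wbar - y, S⟫ := by
    rw [hSdef, inner_sum]
    refine Finset.sum_le_sum (fun j _ => ?_)
    have hgi := grad_ineq (hconv j) (hgrad j (w j)) (y := y)
    have hsplit : ⟪gF j (w j), wbar - w j⟫ + ⟪gF j (w j), w j - y⟫
        = ⟪gF j (w j), wbar - y⟫ := by
      rw [← inner_add_right]; congr 1; abel
    have hsymm : ⟪wbar - y, gF j (w j)⟫ = ⟪gF j (w j), wbar - y⟫ := real_inner_comm _ _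
    have hy : ⟪gF j (w j), y - w j⟫ = - ⟪gF j (w j), w j - y⟫ := by
      rw [← inner_neg_right]; congr 1; abel
    rw [hsymm, ← hsplit]
    rw [hy] at hgi
    linarith
  rw [hexp]
  have hc : 0 ≤ 2 * α / m := by positivity
  have := mul_le_mul_of_nonneg_left hcross hc
  have heq : 2 * ((α / m) * ⟪wbar - y, S⟫) = (2 * α / m) * ⟪wbar - y, S⟫ := by ring
  linarith
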